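/- Let A be a unital algebra over ℂ, M a unital A-bimodule, and m, n positive integers with m ≠ n. If δ : A → M is an (m,n)-Jordan derivable mapping at zero with δ(1) = 0, then for every A ∈ A and every element S of the subalgebra generated by the idempotents of A, δ(SA) = δ(AS) = δ(A)·S = S·δ(A). -/
import Mathlib

open MulOpposite

private lemma smul_cancel_c {M : Type*} [AddCommGroup M] [Module ℂ M] {z : ℂ}
    (hz : z ≠ 0) {x : M} (h : z • x = 0) : x = 0 := by
  rcases smul_eq_zero.mp h with h | h
  · exact absurd h hz
  · exact h

/-- The commuting property extends from idempotents to the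
subring generated by all idempotents of `A`. -/
theorem mn_jordan_derivable_at_zero_idempotent_subring
    {A M : Type*} [Ring A] [Algebra ℂ A]
    [AddCommGroup M] [Module ℂ M] [Module A M] [Module Aᵐᵒᵖ M]
    [SMulCommClass A Aᵐᵒᵖ M]
    (m n : ℕ) (hm : 0 < m) (hn : 0 < n) (hmn : m ≠ n)
    (δ : A → M) (hadd : ∀ a b : A, δ (a + b) = δ a + δ b)
    (hδ1 : δ 1 = 0)
    (hzero : ∀ X Y : A, X * Y = 0 → Y * X = 0 →
      (m + n) • δ (X * Y + Y * X) =
        (2 * m) • (op Y • δ X) + (2 * m) • (op X • δ Y)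
          + (2 * n) • (X • δ Y) + (2 * n) • (Y • δ X))
    (S : A) (hS : S ∈ Subring.closure {P : A | P * P = P}) (a : A) :
    δ (S * a) = δ (a * S) ∧ δ (a * S) = op S • δ a ∧ op S • δ a = S • δ a := by
  -- nonzero scalar facts
  have hmn' : (m : ℂ) ≠ (n : ℂ) := by exact_mod_cast hmn
  have hmn2 : 2 * (m : ℂ) - 2 * n ≠ 0 := by
    intro h; exact hmn' (by linear_combination h / 2)
  have hnm2 : 2 * (n : ℂ) - 2 * m ≠ 0 := by
    intro h; exact hmn' (by linear_combination -h / 2)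
  have hm2 : 2 * (m : ℂ) ≠ 0 := by
    have : (m : ℂ) ≠ 0 := Nat.cast_ne_zero.mpr hm.ne'
    intro h; exact this (by linear_combination h / 2)
  have hn2 : 2 * (n : ℂ) ≠ 0 := by
    have : (n : ℂ) ≠ 0 := Nat.cast_ne_zero.mpr hn.ne'
    intro h; exact this (by linear_combination h / 2)
  have hmn4 : 2 * (m : ℂ) + 2 * n ≠ 0 := by
    have : ((2 * m + 2 * n : ℕ) : ℂ) ≠ 0 := Nat.cast_ne_zero.mpr (by omega)
    intro h; apply this; push_cast; linear_combination h
  -- basic additive facts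
  have hδ0 : δ 0 = 0 := by
    have h := hadd 0 0
    rw [add_zero] at h
    exact (left_eq_add.mp h)
  have hδneg : ∀ x : A, δ (-x) = - δ x := by
    intro x
    have h := hadd x (-x)
    rw [add_neg_cancel, hδ0] at h
    exact eq_neg_of_add_eq_zero_right h.symm
  -- the hypothesis at zero products, simplified
  have hz : ∀ X Y : A, X * Y = 0 → Y * X = 0 →
      (2 * m) • (op Y • δ X) + (2 * m) • (op X • δ Y)
        + (2 * n) • (X • δ Y) + (2 * n) • (Y • δ X) = 0 := by
    intro X Y h1 h2
    have h := hzero X Y h1 h2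
    rw [h1, h2, add_zero, hδ0, smul_zero] at h
    exact h.symm
  -- δ vanishes on idempotents
  have idem0 : ∀ P : A, P * P = P → δ P = 0 := by
    intro P hP
    have movN : ∀ (k : ℕ) (c : A) (y : M), c • (k • y) = k • (c • y) :=
      fun k c y => (smul_comm k c y).symm
    have movN' : ∀ (k : ℕ) (c : Aᵐᵒᵖ) (y : M), c • (k • y) = k • (c • y) :=
      fun k c y => (smul_comm k c y).symm
    have movO : ∀ (c : A) (d : Aᵐᵒᵖ) (y : M), d • (c • y) = c • (d • y) :=
      fun c d y => (smul_comm c d y).symm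
    have PP : ∀ y : M, P • (P • y) = P • y := by
      intro y; rw [← mul_smul, hP]
    have OO : ∀ y : M, op P • (op P • y) = op P • y := by
      intro y; rw [← mul_smul, ← op_mul, hP]
    have h1 : P * (1 - P) = 0 := by rw [mul_sub, mul_one, hP, sub_self]
    have h2 : (1 - P) * P = 0 := by rw [sub_mul, one_mul, hP, sub_self]
    have hQ : δ (1 - P) = - δ P := by
      have h := hadd P (1 - P)
      rw [show P + (1 - P) = 1 by abel, hδ1] at h
      exact eq_neg_of_add_eq_zero_right h.symm
    have b := hz P (1 - P) h1 h2
    rw [hQ] at b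
    simp only [op_sub, op_one, sub_smul, one_smul, smul_sub, smul_neg, smul_add,
      smul_zero] at b
    have bl := congrArg (fun z : M => P • z) b
    have br := congrArg (fun z : M => op P • z) b
    simp only [smul_add, smul_sub, smul_neg, smul_zero, movN, movN', movO, PP, OO] at bl br
    have bc := congrArg (fun z : M => op P • z) bl
    simp only [smul_add, smul_sub, smul_neg, smul_zero, movN, movN', movO, PP, OO] at bc
    set r := op P • δ P with hrdef
    set l := P • δ P with hldef
    set c := P • r with hcdef
    clear_value r l c
    simp only [← Nat.cast_smul_eq_nsmul ℂ] at b bl br bc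
    push_cast at b bl br bc
    have hc0 : c = 0 := by
      apply smul_cancel_c hmn4
      linear_combination (norm := module) -bc
    have hl0 : l = 0 := by
      apply smul_cancel_c hmn2
      linear_combination (norm := module) bl + (4 * (m:ℂ)) • hc0
    have hr0 : r = 0 := by
      apply smul_cancel_c hnm2
      linear_combination (norm := module) br + (4 * (n:ℂ)) • hc0
    apply smul_cancel_c hmn4
    linear_combination (norm := module) b + (4 * (m:ℂ)) • hr0 + (4 * (n:ℂ)) • hl0
  -- the main idempotent case
  have idem_case : ∀ P : A, P * P = P → ∀ b : A,
      δ (P * b) = δ (b * P) ∧ δ (b * P) = op P • δ b ∧ op P • δ b = P • δ b := by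
    intro P hP b
    have movN : ∀ (k : ℕ) (c : A) (y : M), c • (k • y) = k • (c • y) :=
      fun k c y => (smul_comm k c y).symm
    have movN' : ∀ (k : ℕ) (c : Aᵐᵒᵖ) (y : M), c • (k • y) = k • (c • y) :=
      fun k c y => (smul_comm k c y).symm
    have movO : ∀ (c : A) (d : Aᵐᵒᵖ) (y : M), d • (c • y) = c • (d • y) :=
      fun c d y => (smul_comm c d y).symm
    have PP : ∀ y : M, P • (P • y) = P • y := by
      intro y; rw [← mul_smul, hP]
    have OO : ∀ y : M, op P • (op P • y) = op P • y := by
      intro y; rw [← mul_smul, ← op_mul, hP]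
    have hPQ : P * (1 - P) = 0 := by rw [mul_sub, mul_one, hP, sub_self]
    have hQP : (1 - P) * P = 0 := by rw [sub_mul, one_mul, hP, sub_self]
    have hQQ : (1 - P) * (1 - P) = 1 - P := by
      rw [sub_mul, one_mul, mul_sub, mul_one, hP]; abel
    have hdP : δ P = 0 := idem0 P hP
    have hdQ : δ (1 - P) = 0 := by
      have h := hadd P (1 - P)
      rw [show P + (1 - P) = 1 by abel, hδ1, hdP, zero_add] at h
      exact h.symm
    -- off-diagonal corners vanish
    have h12 : δ (P * (b * (1 - P))) = 0 := by
      have hid : (P + P * (b * (1 - P))) * (P + P * (b * (1 - P)))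
          = P + P * (b * (1 - P)) := by
        have e1 : P * (P * (b * (1 - P))) = P * (b * (1 - P)) := by
          rw [← mul_assoc, hP]
        have e2 : (P * (b * (1 - P))) * P = 0 := by
          rw [mul_assoc, mul_assoc, hQP, mul_zero, mul_zero]
        have e3 : (P * (b * (1 - P))) * (P * (b * (1 - P))) = 0 := by
          rw [← mul_assoc, e2, zero_mul]
        rw [mul_add, add_mul, add_mul, hP, e1, e2, e3, add_zero, add_zero]
      have h0 := idem0 _ hid
      rw [hadd, hdP, zero_add] at h0
      exact h0
    have h21 : δ ((1 - P) * (b * P)) = 0 := by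
      have hid : ((1 - P) + (1 - P) * (b * P)) * ((1 - P) + (1 - P) * (b * P))
          = (1 - P) + (1 - P) * (b * P) := by
        have e1 : (1 - P) * ((1 - P) * (b * P)) = (1 - P) * (b * P) := by
          rw [← mul_assoc, hQQ]
        have e2 : ((1 - P) * (b * P)) * (1 - P) = 0 := by
          rw [mul_assoc, mul_assoc, hPQ, mul_zero, mul_zero]
        have e3 : ((1 - P) * (b * P)) * ((1 - P) * (b * P)) = 0 := by
          rw [← mul_assoc, e2, zero_mul]
        rw [mul_add, add_mul, add_mul, hQQ, e1, e2, e3, add_zero, add_zero]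
      have h0 := idem0 _ hid
      rw [hadd, hdQ, zero_add] at h0
      exact h0
    -- the (1,1) corner
    set w := δ (P * (b * P)) with hw
    have hw_facts : P • w = w ∧ op P • w = w := by
      have p1 : (1 - P) * (P * (b * P)) = 0 := by
        rw [← mul_assoc, hQP, zero_mul]
      have p2 : (P * (b * P)) * (1 - P) = 0 := by
        rw [mul_assoc, mul_assoc, hPQ, mul_zero, mul_zero]
      have b3 := hz (1 - P) (P * (b * P)) p1 p2
      rw [hdQ, ← hw] at b3
      simp only [op_sub, op_one, sub_smul, one_smul, smul_sub, smul_neg, smul_add,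
        smul_zero, zero_add, add_zero] at b3
      have bl3 := congrArg (fun z : M => P • z) b3
      have br3 := congrArg (fun z : M => op P • z) b3
      simp only [smul_add, smul_sub, smul_neg, smul_zero, movN, movN', movO, PP, OO] at bl3 br3
      set r3 := op P • w with hr3def
      set l3 := P • w with hl3def
      set c3 := P • r3 with hc3def
      clear_value r3 l3 c3
      simp only [← Nat.cast_smul_eq_nsmul ℂ] at b3 bl3 br3
      push_cast at b3 bl3 br3
      have hl : l3 - c3 = 0 := by
        apply smul_cancel_c hm2
        linear_combination (norm := module) bl3
      have hr : r3 - c3 = 0 := by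
        apply smul_cancel_c hn2
        linear_combination (norm := module) br3
      have hwc : w - c3 = 0 := by
        apply smul_cancel_c hmn4
        linear_combination (norm := module) b3 + (2 * (m:ℂ)) • hr + (2 * (n:ℂ)) • hl
      exact ⟨(sub_eq_zero.mp hl).trans (sub_eq_zero.mp hwc).symm,
        (sub_eq_zero.mp hr).trans (sub_eq_zero.mp hwc).symm⟩
    -- the (2,2) corner
    set v := δ ((1 - P) * (b * (1 - P))) with hv
    have hv_facts : P • v = 0 ∧ op P • v = 0 := by
      have p1 : P * ((1 - P) * (b * (1 - P))) = 0 := by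
        rw [← mul_assoc, hPQ, zero_mul]
      have p2 : ((1 - P) * (b * (1 - P))) * P = 0 := by
        rw [mul_assoc, mul_assoc, hQP, mul_zero, mul_zero]
      have b4 := hz P ((1 - P) * (b * (1 - P))) p1 p2
      rw [hdP, ← hv] at b4
      simp only [smul_zero, zero_add, add_zero] at b4
      have bl4 := congrArg (fun z : M => P • z) b4
      have br4 := congrArg (fun z : M => op P • z) b4
      simp only [smul_add, smul_sub, smul_neg, smul_zero, movN, movN', movO, PP, OO] at bl4 br4
      have bc4 := congrArg (fun z : M => op P • z) bl4
      simp only [smul_add, smul_sub, smul_neg, smul_zero, movN, movN', movO, PP, OO] at bc4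
      set r4 := op P • v with hr4def
      set l4 := P • v with hl4def
      set c4 := P • r4 with hc4def
      clear_value r4 l4 c4
      simp only [← Nat.cast_smul_eq_nsmul ℂ] at b4 bl4 br4 bc4
      push_cast at b4 bl4 br4 bc4
      have hc : c4 = 0 := by
        apply smul_cancel_c hmn4
        linear_combination (norm := module) bc4
      have hl : l4 = 0 := by
        apply smul_cancel_c hn2
        linear_combination (norm := module) bl4 - (2 * (m:ℂ)) • hc
      have hr : r4 = 0 := by
        apply smul_cancel_c hm2
        linear_combination (norm := module) br4 - (2 * (n:ℂ)) • hc
      exact ⟨hl, hr⟩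
    -- assemble
    have hb : b = P * (b * P) + P * (b * (1 - P)) + (1 - P) * (b * P)
        + (1 - P) * (b * (1 - P)) := by noncomm_ring
    have hdb : δ b = w + v := by
      conv_lhs => rw [hb]
      rw [hadd, hadd, hadd, h12, h21, add_zero, add_zero, ← hw, ← hv]
    have hPb : P * b = P * (b * P) + P * (b * (1 - P)) := by noncomm_ring
    have hbP : b * P = P * (b * P) + (1 - P) * (b * P) := by noncomm_ring
    have hdPb : δ (P * b) = w := by
      rw [hPb, hadd, h12, add_zero]
    have hdbP : δ (b * P) = w := by
      rw [hbP, hadd, h21, add_zero]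
    have hop : op P • δ b = w := by
      rw [hdb, smul_add, hv_facts.2, add_zero, hw_facts.2]
    have hsm : P • δ b = w := by
      rw [hdb, smul_add, hv_facts.1, add_zero, hw_facts.1]
    exact ⟨hdPb.trans hdbP.symm, hdbP.trans hop.symm, hop.trans hsm.symm⟩
  -- closure induction
  have main : ∀ s : A, s ∈ Subring.closure {P : A | P * P = P} → ∀ b : A,
      δ (s * b) = δ (b * s) ∧ δ (b * s) = op s • δ b ∧ op s • δ b = s • δ b := by
    intro s hs
    induction hs using Subring.closure_induction with
    | mem x hx => exact idem_case x hx
    | zero =>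
      intro b
      refine ⟨by rw [zero_mul, mul_zero], ?_, ?_⟩
      · rw [mul_zero, hδ0, op_zero, zero_smul]
      · rw [op_zero, zero_smul, zero_smul]
    | one =>
      intro b
      refine ⟨by rw [one_mul, mul_one], ?_, ?_⟩
      · rw [mul_one, op_one, one_smul]
      · rw [op_one, one_smul, one_smul]
    | add x y hx hy ihx ihy =>
      intro b
      obtain ⟨e1, e2, e3⟩ := ihx b
      obtain ⟨f1, f2, f3⟩ := ihy b
      refine ⟨?_, ?_, ?_⟩
      · rw [add_mul, mul_add, hadd, hadd, e1, f1]
      · rw [mul_add, hadd, e2, f2, op_add, add_smul]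
      · rw [op_add, add_smul, add_smul, e3, f3]
    | neg x hx ihx =>
      intro b
      obtain ⟨e1, e2, e3⟩ := ihx b
      refine ⟨?_, ?_, ?_⟩
      · rw [neg_mul, mul_neg, hδneg, hδneg, e1]
      · rw [mul_neg, hδneg, e2, op_neg, neg_smul]
      · rw [op_neg, neg_smul, neg_smul, e3]
    | mul x y hx hy ihx ihy =>
      intro b
      have fx : ∀ c : A, δ (x * c) = x • δ c := by
        intro c
        obtain ⟨e1, e2, e3⟩ := ihx c
        rw [e1, e2, e3]
      have fy : ∀ c : A, δ (y * c) = y • δ c := by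
        intro c
        obtain ⟨e1, e2, e3⟩ := ihy c
        rw [e1, e2, e3]
      have gx : ∀ c : A, δ (c * x) = op x • δ c := fun c => (ihx c).2.1
      have gy : ∀ c : A, δ (c * y) = op y • δ c := fun c => (ihy c).2.1
      have e1 : δ (x * y * b) = (x * y) • δ b := by
        rw [mul_assoc, fx, fy, mul_smul]
      have e2 : δ (b * (x * y)) = op (x * y) • δ b := by
        rw [← mul_assoc, gy, gx, ← mul_smul, ← op_mul]
      have e3 : op (x * y) • δ b = (x * y) • δ b := by
        rw [op_mul, mul_smul, (ihx b).2.2, ← smul_comm x (op y) (δ b),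
          (ihy b).2.2, ← mul_smul]
      exact ⟨e1.trans (e3.symm.trans e2.symm), e2, e3⟩
  exact main S hS a
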